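/- Let R = k[x_1,…,x_m], f_1,…,f_ℓ ∈ R homogeneous of degree d, and s = (s_1,…,s_ℓ) a homogeneous syzygy of (f_1,…,f_ℓ) with leading term (with respect to a position-over-term module order) equal to τ·e_i for a monomial τ. Then τ·f_i lies in the k-linear span of the set {τ'·f_j : j < i and τ' a monomial of degree deg(τ) + d − deg(f_j)} ∪ {τ'·f_i : τ' a monomial of degree deg(τ) with τ' smaller than τ in the monomial order}. -/

import Mathlib

open MvPolynomial

/-- syzygy criterion, part 1: if `s` is a homogeneous syzygy of the homogeneous
degree-`d` polynomials `f₁,…,f_ℓ` whose POT leading term is `τ·eᵢ` (with respect to a monomial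
order given by a trichotomous, multiplication-compatible relation `lt` on exponent vectors),
then `τ·fᵢ` lies in the `k`-linear span of the products `τ'·f_j` with `j < i` and `deg τ' = deg
τ + d - deg f_j = deg τ`, together with the products `τ'·fᵢ` with `deg τ' = deg τ` and
`τ' ≺ τ`. -/
theorem syzygy_criterion_head (k : Type*) [Field k] (m ℓ d : ℕ)
    (lt : (Fin m →₀ ℕ) → (Fin m →₀ ℕ) → Prop)
    (htri : ∀ a b : Fin m →₀ ℕ, a ≠ b → lt a b ∨ lt b a)
    (f : Fin ℓ → MvPolynomial (Fin m) k)
    (hf : ∀ t, (f t).IsHomogeneous d)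
    (s : Fin ℓ → MvPolynomial (Fin m) k)
    (hsyz : ∑ t, s t * f t = 0)
    (e : ℕ) (hshom : ∀ t, (s t).IsHomogeneous e)
    (i : Fin ℓ) (τ : Fin m →₀ ℕ)
    (hlc : coeff τ (s i) ≠ 0)
    (hlead : ∀ (j : Fin ℓ) (τ' : Fin m →₀ ℕ), coeff τ' (s j) ≠ 0 →
      j < i ∨ (j = i ∧ (τ' = τ ∨ lt τ' τ))) :
    (monomial τ (1 : k)) * f i ∈
      Submodule.span k
        ({p | ∃ (j : Fin ℓ) (τ' : Fin m →₀ ℕ), j < i ∧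
            (τ'.sum fun _ e => e) = (τ.sum fun _ e => e) ∧
            p = (monomial τ' (1 : k)) * f j} ∪
         {p | ∃ τ' : Fin m →₀ ℕ,
            (τ'.sum fun _ e => e) = (τ.sum fun _ e => e) ∧ lt τ' τ ∧
            p = (monomial τ' (1 : k)) * f i}) := by

  classical
  set S := Submodule.span k
        ({p | ∃ (j : Fin ℓ) (τ' : Fin m →₀ ℕ), j < i ∧
            (τ'.sum fun _ e => e) = (τ.sum fun _ e => e) ∧
            p = (monomial τ' (1 : k)) * f j} ∪
         {p | ∃ τ' : Fin m →₀ ℕ,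
            (τ'.sum fun _ e => e) = (τ.sum fun _ e => e) ∧ lt τ' τ ∧
            p = (monomial τ' (1 : k)) * f i}) with hS
  have hdeg : ∀ (t : Fin ℓ) (τ' : Fin m →₀ ℕ), coeff τ' (s t) ≠ 0 →
      (τ'.sum fun _ e => e) = e := by
    intro t τ' h
    by_contra hne
    exact h ((hshom t).coeff_eq_zero (by simpa [Finsupp.degree_apply, Finsupp.sum] using hne))
  have hτe : (τ.sum fun _ e => e) = e := hdeg i τ hlc
  have expand : ∀ t, s t * f t =
      ∑ τ' ∈ (s t).support, coeff τ' (s t) • ((monomial τ' (1 : k)) * f t) := by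
    intro t
    conv_lhs => rw [(s t).as_sum]
    rw [Finset.sum_mul]
    refine Finset.sum_congr rfl fun τ' _ => ?_
    rw [← smul_mul_assoc, smul_monomial, smul_eq_mul, mul_one]
  have hτmem : τ ∈ (s i).support := by simpa [mem_support_iff] using hlc
  have key : (∑ t, s t * f t) - coeff τ (s i) • ((monomial τ (1 : k)) * f i) ∈ S := by
    rw [← Finset.add_sum_erase _ _ (Finset.mem_univ i), expand i,
      ← Finset.add_sum_erase _ _ hτmem]
    have harr : ∀ a b c : MvPolynomial (Fin m) k, a + b + c - a = b + c :=
      fun a b c => by ring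
    rw [harr]
    refine Submodule.add_mem _ (Submodule.sum_mem _ fun τ' hτ' => ?_)
      (Submodule.sum_mem _ fun t ht => ?_)
    · refine Submodule.smul_mem _ _ (Submodule.subset_span ?_)
      have hc : coeff τ' (s i) ≠ 0 := mem_support_iff.mp (Finset.mem_of_mem_erase hτ')
      have hne : τ' ≠ τ := Finset.ne_of_mem_erase hτ'
      rcases hlead i τ' hc with h | ⟨_, h | h⟩
      · exact absurd h (lt_irrefl i)
      · exact absurd h hne
      · exact Or.inr ⟨τ', by rw [hdeg i τ' hc, hτe], h, rfl⟩
    · rw [expand t]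
      refine Submodule.sum_mem _ fun τ' hτ' => Submodule.smul_mem _ _
        (Submodule.subset_span ?_)
      have hc : coeff τ' (s t) ≠ 0 := (mem_support_iff.mp hτ')
      have hti : t ≠ i := Finset.ne_of_mem_erase ht
      rcases hlead t τ' hc with h | ⟨h, _⟩
      · exact Or.inl ⟨t, τ', h, by rw [hdeg t τ' hc, hτe], rfl⟩
      · exact absurd h hti
  rw [hsyz, zero_sub] at key
  have key2 : coeff τ (s i) • ((monomial τ (1 : k)) * f i) ∈ S := by
    simpa using Submodule.neg_mem _ key
  have := Submodule.smul_mem S (coeff τ (s i))⁻¹ key2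
  rwa [smul_smul, inv_mul_cancel₀ hlc, one_smul] at this
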